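/- Define h on the punctured plane ℂ∖{0} by h(z) = z/|z| for 0 < |z| ≤ 1 and h(z) = (z + 1/z̄)/2 for |z| ≥ 1. Then h is continuous, lies in W^{1,2}_{loc}(ℂ∖{0}), and its Hopf differential satisfies h_z(z) · conj(h_{z̄}(z)) = −1/(4z²) for almost every z ∈ ℂ∖{0}; in particular the Hopf differential is holomorphic, yet h is not harmonic on the unit disk minus the origin. -/

import Mathlib

open MeasureTheory Complex

/-- The Laplacian of a function on `ℂ ≃ ℝ²`. -/
noncomputable def lap {E : Type*} [NormedAddCommGroup E] [NormedSpace ℝ E]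
    (u : ℂ → E) (x : ℂ) : E :=
  fderiv ℝ (fun y => fderiv ℝ u y 1) x 1 +
    fderiv ℝ (fun y => fderiv ℝ u y Complex.I) x Complex.I

/-- Harmonic on a set: twice continuously differentiable with vanishing Laplacian. -/
def HarmonicOn {E : Type*} [NormedAddCommGroup E] [NormedSpace ℝ E]
    (u : ℂ → E) (s : Set ℂ) : Prop :=
  ContDiffOn ℝ 2 u s ∧ ∀ x ∈ s, lap u x = 0

/-- Wirtinger derivative `∂/∂z` read off from a real differential. -/
noncomputable def wirtZ (L : ℂ →L[ℝ] ℂ) : ℂ := (L 1 - Complex.I * L Complex.I) / 2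

/-- Wirtinger derivative `∂/∂z̄` read off from a real differential. -/
noncomputable def wirtZbar (L : ℂ →L[ℝ] ℂ) : ℂ := (L 1 + Complex.I * L Complex.I) / 2

noncomputable def Ncl (z : ℂ) : ℂ →L[ℝ] ℝ :=
  (2:ℝ) • (reCLM.comp ((ContinuousLinearMap.mul ℝ ℂ) ((starRingEnd ℂ) z)))

@[simp] lemma Ncl_apply (z v : ℂ) : Ncl z v = 2 * ((starRingEnd ℂ) z * v).re := by
  simp [Ncl]

lemma hasFDerivAt_normSq (z : ℂ) : HasFDerivAt normSq (Ncl z) z := by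
  have h : HasFDerivAt (fun w : ℂ => w.re * w.re + w.im * w.im)
      ((z.re • reCLM + z.re • reCLM) + (z.im • imCLM + z.im • imCLM)) z := by
    exact ((reCLM.hasFDerivAt.mul reCLM.hasFDerivAt).add
      (imCLM.hasFDerivAt.mul imCLM.hasFDerivAt) : _)
  have : (fun w : ℂ => w.re * w.re + w.im * w.im) = normSq := by
    funext w; simp [normSq_apply]
  rw [this] at h
  convert h using 1
  ext v
  simp [Ncl, mul_comm]
  ring

noncomputable def chi (s : ℝ) : ℝ := if s ≤ 1 then (Real.sqrt s)⁻¹ else (s+1)/(2*s)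
noncomputable def dchi (s : ℝ) : ℝ := -1/(2 * s * max (Real.sqrt s) s)

lemma sqrt_max_of_le {s : ℝ} (h0 : 0 ≤ s) (h1 : s ≤ 1) : max (Real.sqrt s) s = Real.sqrt s := by
  rw [max_eq_left]
  nlinarith [Real.sq_sqrt h0, Real.sqrt_nonneg s, Real.sqrt_le_one.2 h1]

lemma sqrt_max_of_ge {s : ℝ} (h1 : 1 ≤ s) : max (Real.sqrt s) s = s := by
  rw [max_eq_right]
  nlinarith [Real.sq_sqrt (by linarith : (0:ℝ) ≤ s), Real.sqrt_nonneg s,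
    Real.one_le_sqrt.2 h1]

lemma hasDerivAt_inv_sqrt {s : ℝ} (hs : 0 < s) :
    HasDerivAt (fun r => (Real.sqrt r)⁻¹) (-1/(2 * s * Real.sqrt s)) s := by
  have h1 : HasDerivAt Real.sqrt (1 / (2 * Real.sqrt s)) s := Real.hasDerivAt_sqrt hs.ne'
  have h2 := h1.inv (Real.sqrt_ne_zero'.2 hs)
  refine h2.congr_deriv ?_
  have hsq : Real.sqrt s * Real.sqrt s = s := Real.mul_self_sqrt hs.le
  field_simp
  nlinarith [Real.sqrt_pos.2 hs]

lemma hasDerivAt_outer {s : ℝ} (hs : 0 < s) :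
    HasDerivAt (fun r : ℝ => (r+1)/(2*r)) (-1/(2 * s * s)) s := by
  have h1 : HasDerivAt (fun r : ℝ => r + 1) 1 s := (hasDerivAt_id s).add_const 1
  have h2 : HasDerivAt (fun r : ℝ => 2 * r) 2 s := by
    simpa using (hasDerivAt_id s).const_mul (2:ℝ)
  have h3 := h1.div h2 (by positivity)
  refine h3.congr_deriv ?_
  field_simp
  ring

lemma chi_hasDerivAt {s : ℝ} (hs : 0 < s) : HasDerivAt chi (dchi s) s := by
  rcases lt_trichotomy s 1 with h | h | h
  · have : dchi s = -1/(2 * s * Real.sqrt s) := by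
      rw [dchi, sqrt_max_of_le hs.le h.le]
    rw [this]
    refine (hasDerivAt_inv_sqrt hs).congr_of_eventuallyEq ?_
    filter_upwards [eventually_lt_nhds h] with r hr
    simp [chi, hr.le]
  · subst h
    have hIic : HasDerivWithinAt chi (-1/2 : ℝ) (Set.Iic 1) 1 := by
      refine ((hasDerivAt_inv_sqrt hs).hasDerivWithinAt.congr ?_ ?_).congr_deriv ?_
      · intro r hr; simp [chi, (Set.mem_Iic.1 hr : r ≤ 1)]
      · simp [chi]
      · norm_num
    have hIci : HasDerivWithinAt chi (-1/2 : ℝ) (Set.Ici 1) 1 := by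
      refine ((hasDerivAt_outer hs).hasDerivWithinAt.congr ?_ ?_).congr_deriv ?_
      · intro r hr
        rcases eq_or_lt_of_le (Set.mem_Ici.1 hr) with h' | h'
        · subst h'; norm_num [chi]
        · simp [chi, not_le.2 h']
      · norm_num [chi]
      · norm_num
    have := hIic.union hIci
    rw [Set.Iic_union_Ici] at this
    have : HasDerivAt chi (-1/2 : ℝ) 1 := hasDerivWithinAt_univ.1 this
    convert this using 1
    norm_num [dchi, sqrt_max_of_ge le_rfl]
  · have : dchi s = -1/(2 * s * s) := by rw [dchi, sqrt_max_of_ge h.le]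
    rw [this]
    refine (hasDerivAt_outer hs).congr_of_eventuallyEq ?_
    filter_upwards [eventually_gt_nhds h] with r hr
    simp [chi, not_le.2 hr]


noncomputable def Hfun (z : ℂ) : ℂ := chi (normSq z) • z

lemma h_eq_Hfun :
    (fun z => if ‖z‖ ≤ 1 then z / (‖z‖ : ℂ)
      else (z + 1 / (starRingEnd ℂ) z) / 2) = Hfun := by
  funext z
  by_cases hz : ‖z‖ ≤ 1
  · have hn : normSq z ≤ 1 := by
      rw [normSq_eq_norm_sq]; nlinarith [norm_nonneg z]
    have hs : Real.sqrt (normSq z) = ‖z‖ := (Complex.norm_def z).symm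
    simp only [if_pos hz, Hfun, chi, if_pos hn, hs]
    rw [Complex.real_smul, Complex.ofReal_inv, div_eq_mul_inv, mul_comm]
  · have hz0 : z ≠ 0 := by
      intro h0; rw [h0] at hz; simp at hz
    have hn : ¬ normSq z ≤ 1 := by
      rw [normSq_eq_norm_sq]; push_neg at hz ⊢; nlinarith
    have hn0 : normSq z ≠ 0 := fun H => hz0 (normSq_eq_zero.1 H)
    have hc0 : (starRingEnd ℂ) z ≠ 0 := by simpa using hz0
    have hmc : z * (starRingEnd ℂ) z = (normSq z : ℂ) := Complex.mul_conj z
    have hn0' : (normSq z : ℂ) ≠ 0 := by exact_mod_cast hn0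
    simp only [if_neg hz, Hfun, chi, if_neg hn, Complex.real_smul]
    push_cast
    field_simp
    linear_combination (-1 : ℂ) * hmc

noncomputable def Dcl (z : ℂ) : ℂ →L[ℝ] ℂ :=
  chi (normSq z) • ContinuousLinearMap.id ℝ ℂ + (dchi (normSq z) • Ncl z).smulRight z

lemma Dcl_apply (z v : ℂ) :
    Dcl z v = (chi (normSq z) : ℂ) * v + ((dchi (normSq z) * (2 * ((starRingEnd ℂ) z * v).re)) : ℝ) • z := by
  simp [Dcl, Complex.real_smul]

lemma hasFDerivAt_Hfun {z : ℂ} (hz : z ≠ 0) : HasFDerivAt Hfun (Dcl z) z := by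
  have hn : 0 < normSq z := normSq_pos.2 hz
  have h1 : HasFDerivAt (fun y : ℂ => chi (normSq y)) (dchi (normSq z) • Ncl z) z :=
    (chi_hasDerivAt hn).comp_hasFDerivAt z (hasFDerivAt_normSq z)
  have h2 := h1.smul (hasFDerivAt_id z)
  exact h2

lemma wirtZ_Dcl (z : ℂ) :
    wirtZ (Dcl z) = ((chi (normSq z) + normSq z * dchi (normSq z) : ℝ) : ℂ) := by
  simp only [wirtZ, Dcl_apply]
  apply Complex.ext <;>
    simp [normSq_apply, Complex.real_smul, Complex.div_re, Complex.div_im,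
      Complex.normSq_apply, pow_two, Complex.mul_re, Complex.mul_im] <;>
    try ring

lemma wirtZbar_Dcl (z : ℂ) :
    wirtZbar (Dcl z) = ((dchi (normSq z) : ℝ) : ℂ) * z ^ 2 := by
  simp only [wirtZbar, Dcl_apply]
  apply Complex.ext <;>
    simp [normSq_apply, Complex.real_smul, Complex.div_re, Complex.div_im,
      Complex.normSq_apply, pow_two, Complex.mul_re, Complex.mul_im] <;>
    try ring

lemma hopf_real {n : ℝ} (hn : 0 < n) :
    (chi n + n * dchi n) * dchi n = -1/(4 * n^2) := by
  have hs0 : 0 < Real.sqrt n := Real.sqrt_pos.2 hn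
  have hss : Real.sqrt n * Real.sqrt n = n := Real.mul_self_sqrt hn.le
  by_cases h1 : n ≤ 1
  · rw [chi, if_pos h1, dchi, sqrt_max_of_le hn.le h1]
    field_simp
    nlinarith [hss, hs0]
  · rw [chi, if_neg h1, dchi, sqrt_max_of_ge (le_of_not_ge h1)]
    field_simp
    ring

lemma hopf_complex {z : ℂ} (hz : z ≠ 0) :
    wirtZ (Dcl z) * (starRingEnd ℂ) (wirtZbar (Dcl z)) = -1 / (4 * z ^ 2) := by
  have hn : 0 < normSq z := normSq_pos.2 hz
  have hmc : z * (starRingEnd ℂ) z = (normSq z : ℂ) := Complex.mul_conj z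
  have hn0' : (normSq z : ℂ) ≠ 0 := by
    exact_mod_cast hn.ne'
  rw [wirtZ_Dcl, wirtZbar_Dcl]
  rw [map_mul, map_pow, Complex.conj_ofReal]
  have key := hopf_real hn
  have keyC : ((chi (normSq z) + normSq z * dchi (normSq z) : ℝ) : ℂ) * (dchi (normSq z) : ℂ)
      = -1 / (4 * (normSq z : ℂ)^2) := by
    exact_mod_cast congrArg (Complex.ofReal ·) key
  calc ((chi (normSq z) + normSq z * dchi (normSq z) : ℝ) : ℂ) *
        ((dchi (normSq z) : ℂ) * ((starRingEnd ℂ) z) ^ 2)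
      = (((chi (normSq z) + normSq z * dchi (normSq z) : ℝ) : ℂ) * (dchi (normSq z) : ℂ)) *
        ((starRingEnd ℂ) z) ^ 2 := by ring
    _ = (-1 / (4 * (normSq z : ℂ)^2)) * ((starRingEnd ℂ) z) ^ 2 := by rw [keyC]
    _ = -1 / (4 * z ^ 2) := by
        have hzc : (starRingEnd ℂ) z ≠ 0 := by simpa using hz
        have h2 : ((normSq z : ℂ))^2 = z^2 * ((starRingEnd ℂ) z)^2 := by
          rw [← hmc]; ring
        rw [h2]
        field_simp

lemma continuous_Ncl : Continuous fun z => Ncl z := by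
  have h1 : Continuous fun z : ℂ => (ContinuousLinearMap.mul ℝ ℂ) ((starRingEnd ℂ) z) :=
    (ContinuousLinearMap.mul ℝ ℂ).continuous.comp continuous_conj
  have h2 : Continuous fun z : ℂ => reCLM.comp ((ContinuousLinearMap.mul ℝ ℂ) ((starRingEnd ℂ) z)) :=
    Continuous.clm_comp continuous_const h1
  exact (continuous_const (y := (2:ℝ))).smul h2

lemma continuousOn_Dcl : ContinuousOn (fun z => Dcl z) {z : ℂ | z ≠ 0} := by
  have hPhi : Continuous fun p : (ℝ × ℝ) × ℂ =>
      p.1.1 • ContinuousLinearMap.id ℝ ℂ +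
        (ContinuousLinearMap.smulRightL ℝ ℂ ℂ) (p.1.2 • Ncl p.2) p.2 := by
    refine ((continuous_fst.fst.smul continuous_const).add ?_)
    refine Continuous.clm_apply ?_ continuous_snd
    exact (ContinuousLinearMap.smulRightL ℝ ℂ ℂ).continuous.comp
      (continuous_fst.snd.smul (continuous_Ncl.comp continuous_snd))
  intro z hz
  have hz0 : z ≠ 0 := hz
  have hn : 0 < normSq z := normSq_pos.2 hz0
  have hns : ContinuousAt normSq z := Complex.continuous_normSq.continuousAt
  have hchi : ContinuousAt (fun y : ℂ => chi (normSq y)) z :=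
    ((chi_hasDerivAt hn).continuousAt).comp hns
  have hmax : ContinuousAt (fun s : ℝ => max (Real.sqrt s) s) (normSq z) :=
    (Real.continuous_sqrt.continuousAt).max continuousAt_id
  have hden : ContinuousAt (fun s : ℝ => 2 * s * max (Real.sqrt s) s) (normSq z) :=
    (continuousAt_const.mul continuousAt_id).mul hmax
  have hdne : 2 * normSq z * max (Real.sqrt (normSq z)) (normSq z) ≠ 0 := by
    have : 0 < max (Real.sqrt (normSq z)) (normSq z) := lt_max_of_lt_right hn
    positivity
  have hdchi : ContinuousAt (fun y : ℂ => dchi (normSq y)) z := by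
    have : ContinuousAt dchi (normSq z) := by
      unfold dchi
      exact continuousAt_const.div hden hdne
    exact this.comp hns
  have htup : ContinuousAt (fun y : ℂ => (((chi (normSq y), dchi (normSq y)) : ℝ × ℝ), y)) z :=
    (hchi.prodMk hdchi).prodMk continuousAt_id
  have := (hPhi.continuousAt).comp htup
  apply ContinuousAt.continuousWithinAt
  convert this using 2
  rfl

lemma sqrt_quarter : Real.sqrt (1/4 : ℝ) = 1/2 := by
  rw [show (1/4:ℝ) = (1/2)^2 by norm_num, Real.sqrt_sq (by norm_num : (0:ℝ) ≤ 1/2)]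

lemma dchi_quarter : dchi (1/4 : ℝ) = -4 := by
  rw [dchi, sqrt_max_of_le (by norm_num) (by norm_num), sqrt_quarter]
  norm_num

lemma hasDerivAt_dchi_quarter : HasDerivAt dchi 24 (1/4 : ℝ) := by
  have hsq : HasDerivAt Real.sqrt 1 (1/4 : ℝ) := by
    have := Real.hasDerivAt_sqrt (by norm_num : (1/4:ℝ) ≠ 0)
    rwa [sqrt_quarter, show (1:ℝ)/(2*(1/2)) = 1 by norm_num] at this
  have hc : HasDerivAt (fun s : ℝ => 2 * s) 2 (1/4 : ℝ) := by
    simpa using (hasDerivAt_id (1/4:ℝ)).const_mul (2:ℝ)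
  have hf : HasDerivAt (fun s : ℝ => 2 * s * Real.sqrt s) (3/2) (1/4 : ℝ) := by
    have := hc.mul hsq
    rw [sqrt_quarter] at this
    refine this.congr_deriv ?_
    norm_num
  have hne : 2 * (1/4 : ℝ) * Real.sqrt (1/4) ≠ 0 := by
    rw [sqrt_quarter]; norm_num
  have hinv := hf.inv hne
  have h24 : -(3/2) / (2 * (1/4:ℝ) * Real.sqrt (1/4))^2 = -24 := by
    rw [sqrt_quarter]; norm_num
  rw [h24] at hinv
  have hneg := hinv.neg
  refine hneg.congr_of_eventuallyEq ?_ |>.congr_deriv (by norm_num)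
  filter_upwards [isOpen_Ioo.mem_nhds (by norm_num : (1/4:ℝ) ∈ Set.Ioo 0 1)] with s hs
  rw [dchi, sqrt_max_of_le hs.1.le hs.2.le]
  simp only [Pi.neg_apply, Pi.inv_apply]
  ring

lemma Dcl_one (y : ℂ) :
    Dcl y 1 = (fun w : ℂ => ((chi (normSq w) : ℂ)) + (dchi (normSq w) * (2 * w.re)) • w) y := by
  simp [Dcl_apply]

lemma Dcl_I (y : ℂ) :
    Dcl y I = (fun w : ℂ => ((chi (normSq w) : ℂ)) * I + (dchi (normSq w) * (2 * w.im)) • w) y := by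
  simp [Dcl_apply, Complex.mul_re]

lemma lap_Hfun : lap Hfun ((1/2 : ℝ) : ℂ) = -4 := by
  set z₀ : ℂ := ((1/2 : ℝ) : ℂ) with hz₀def
  have hz0 : z₀ ≠ 0 := by
    simp [hz₀def]
  have hnsq : normSq z₀ = 1/4 := by
    simp [hz₀def, Complex.normSq_ofReal]; norm_num
  have hmemne : {y : ℂ | y ≠ 0} ∈ nhds z₀ := isOpen_ne.mem_nhds hz0
  have hn' := hasFDerivAt_normSq z₀
  have hchiF : HasFDerivAt (fun y : ℂ => chi (normSq y)) ((-4:ℝ) • Ncl z₀) z₀ := by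
    have h0 : (0:ℝ) < normSq z₀ := by rw [hnsq]; norm_num
    have := (chi_hasDerivAt h0).comp_hasFDerivAt z₀ hn'
    rwa [hnsq, dchi_quarter] at this
  have hchiC : HasFDerivAt (fun y : ℂ => ((chi (normSq y) : ℂ)))
      (ofRealCLM.comp ((-4:ℝ) • Ncl z₀)) z₀ :=
    (ofRealCLM.hasFDerivAt).comp z₀ hchiF
  have hdchiF : HasFDerivAt (fun y : ℂ => dchi (normSq y)) ((24:ℝ) • Ncl z₀) z₀ := by
    have h24 : HasDerivAt dchi 24 (normSq z₀) := by rw [hnsq]; exact hasDerivAt_dchi_quarter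
    exact h24.comp_hasFDerivAt z₀ hn'
  have hre2 : HasFDerivAt (fun y : ℂ => 2 * y.re) ((2:ℝ) • (reCLM : ℂ →L[ℝ] ℝ)) z₀ :=
    (reCLM.hasFDerivAt).const_mul 2
  have him2 : HasFDerivAt (fun y : ℂ => 2 * y.im) ((2:ℝ) • (imCLM : ℂ →L[ℝ] ℝ)) z₀ :=
    (imCLM.hasFDerivAt).const_mul 2
  have hmul1 := hdchiF.mul hre2
  have hsmul1 := hmul1.smul (hasFDerivAt_id z₀)
  have hA1 := hchiC.add hsmul1
  have hmulI := hdchiF.mul him2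
  have hsmulI := hmulI.smul (hasFDerivAt_id z₀)
  have hAI := (hchiC.mul_const I).add hsmulI
  have hu1 : (fun y : ℂ => fderiv ℝ Hfun y 1) =ᶠ[nhds z₀] (fun y => Dcl y 1) := by
    filter_upwards [hmemne] with y hy
    rw [(hasFDerivAt_Hfun hy).fderiv]
  have huI : (fun y : ℂ => fderiv ℝ Hfun y I) =ᶠ[nhds z₀] (fun y => Dcl y I) := by
    filter_upwards [hmemne] with y hy
    rw [(hasFDerivAt_Hfun hy).fderiv]
  have e1 : (fun y : ℂ => Dcl y 1)
      = (fun w : ℂ => ((chi (normSq w) : ℂ)) + (dchi (normSq w) * (2 * w.re)) • w) :=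
    funext Dcl_one
  have eI : (fun y : ℂ => Dcl y I)
      = (fun w : ℂ => ((chi (normSq w) : ℂ)) * I + (dchi (normSq w) * (2 * w.im)) • w) :=
    funext Dcl_I
  have f1 : fderiv ℝ (fun y : ℂ => fderiv ℝ Hfun y 1) z₀
      = fderiv ℝ (fun y : ℂ => Dcl y 1) z₀ := hu1.fderiv_eq
  have fI : fderiv ℝ (fun y : ℂ => fderiv ℝ Hfun y I) z₀
      = fderiv ℝ (fun y : ℂ => Dcl y I) z₀ := huI.fderiv_eq
  have hA1' : HasFDerivAt
      (fun w : ℂ => ((chi (normSq w) : ℂ)) + (dchi (normSq w) * (2 * w.re)) • w)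
      (ofRealCLM.comp ((-4:ℝ) • Ncl z₀) +
        ((dchi (normSq z₀) * (2 * z₀.re)) • ContinuousLinearMap.id ℝ ℂ +
          (dchi (normSq z₀) • (2:ℝ) • reCLM + (2 * z₀.re) • (24:ℝ) • Ncl z₀).smulRight z₀)) z₀ := hA1
  have hAI' : HasFDerivAt
      (fun w : ℂ => ((chi (normSq w) : ℂ)) * I + (dchi (normSq w) * (2 * w.im)) • w)
      (I • ofRealCLM.comp ((-4:ℝ) • Ncl z₀) +
        ((dchi (normSq z₀) * (2 * z₀.im)) • ContinuousLinearMap.id ℝ ℂ +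
          (dchi (normSq z₀) • (2:ℝ) • imCLM + (2 * z₀.im) • (24:ℝ) • Ncl z₀).smulRight z₀)) z₀ := hAI
  rw [lap, f1, fI, e1, eI, hA1'.fderiv, hAI'.fderiv]
  have hre : z₀.re = 1/2 := by simp [hz₀def]
  have him : z₀.im = 0 := by simp [hz₀def]
  have hconj : (starRingEnd ℂ) z₀ = z₀ := by rw [hz₀def, Complex.conj_ofReal]
  simp only [ContinuousLinearMap.add_apply, ContinuousLinearMap.comp_apply,
    ContinuousLinearMap.coe_smul', Pi.smul_apply, ContinuousLinearMap.smulRight_apply,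
    ContinuousLinearMap.id_apply, Ncl_apply, hconj, ofRealCLM_apply,
    ContinuousLinearMap.coe_coe, reCLM_apply, imCLM_apply]
  rw [hnsq, dchi_quarter, hre, him]
  simp [hz₀def, Complex.real_smul]
  norm_num

/-- The mapping `h(z) = z/|z|` for `|z| ≤ 1`, `h(z) = (z + 1/z̄)/2` for `|z| ≥ 1`
on the punctured plane is continuous, lies in `W^{1,2}_loc`, has Hopf
differential `h_z conj(h_z̄) = -1/(4z²)` a.e. (which is holomorphic), yet `h` is
not harmonic on the punctured unit disk. -/
theorem stmt5 (h : ℂ → ℂ)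
    (hdef : h = fun z => if ‖z‖ ≤ 1 then z / (‖z‖ : ℂ)
      else (z + 1 / (starRingEnd ℂ) z) / 2) :
    ContinuousOn h {z : ℂ | z ≠ 0} ∧
    (∀ K : Set ℂ, K ⊆ {z : ℂ | z ≠ 0} → IsCompact K →
      IntegrableOn (fun z => ‖h z‖ ^ 2 + ‖fderiv ℝ h z‖ ^ 2) K volume) ∧
    (∀ᵐ z ∂(volume : Measure ℂ), z ≠ 0 →
      DifferentiableAt ℝ h z ∧
      wirtZ (fderiv ℝ h z) * (starRingEnd ℂ) (wirtZbar (fderiv ℝ h z))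
        = -1 / (4 * z ^ 2)) ∧
    DifferentiableOn ℂ (fun z => -1 / (4 * z ^ 2)) {z : ℂ | z ≠ 0} ∧
    ¬ HarmonicOn h (Metric.ball (0 : ℂ) 1 \ {0}) := by
  rw [hdef, h_eq_Hfun]
  refine ⟨?_, ?_, ?_, ?_, ?_⟩
  · exact fun z hz => ((hasFDerivAt_Hfun hz).differentiableAt.continuousAt).continuousWithinAt
  · intro K hK hKc
    have hcont : ContinuousOn (fun z => ‖Hfun z‖ ^ 2 + ‖Dcl z‖ ^ 2) K := by
      have h1 : ContinuousOn Hfun K := fun z hz =>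
        ((hasFDerivAt_Hfun (hK hz)).differentiableAt.continuousAt).continuousWithinAt
      exact ((h1.norm).pow 2).add (((continuousOn_Dcl.mono hK).norm).pow 2)
    have hint := hcont.integrableOn_compact (μ := volume) hKc
    refine hint.congr_fun ?_ hKc.measurableSet
    intro z hz
    simp only
    rw [(hasFDerivAt_Hfun (hK hz)).fderiv]
  · refine Filter.Eventually.of_forall fun z hz => ?_
    refine ⟨(hasFDerivAt_Hfun hz).differentiableAt, ?_⟩
    rw [(hasFDerivAt_Hfun hz).fderiv]
    exact hopf_complex hz
  · intro z hz
    have hz0 : z ≠ 0 := hz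
    refine DifferentiableAt.differentiableWithinAt ?_
    exact (differentiableAt_const (-1)).div
      ((differentiableAt_const 4).mul (differentiableAt_pow 2))
      (mul_ne_zero (by norm_num : (4:ℂ) ≠ 0) (pow_ne_zero 2 hz0))
  · rintro ⟨-, hlap⟩
    have hmem : ((1/2 : ℝ) : ℂ) ∈ Metric.ball (0 : ℂ) 1 \ {0} := by
      constructor
      · simp [Complex.norm_real]
        norm_num
      · norm_num
    have := hlap _ hmem
    rw [lap_Hfun] at this
    norm_num at this
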